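/- arXiv:2310.10835 — 3 statements merged into one kernel-verified Lean document; each statement's English description precedes it below -/
import Mathlib

section
/- Let n ≥ 1, let f : ℝⁿ → ℝ be twice continuously differentiable with ∇f Lipschitz with constant L_f > 0, let Z = ∫ e^{−f(x)} dx ∈ (0, ∞) and π(x) = e^{−f(x)}/Z. Let ν : ℝⁿ → ℝ be an everywhere positive, continuously differentiable probability density and let F : ℝⁿ → ℝⁿ be measurable. Assume the integrals ∫ ‖∇f(x)‖² ν(x) dx, ∫ ‖∇log ν(x)‖² ν(x) dx, and ∫ ‖F(x) − ∇f(x)‖² ν(x) dx are finite, and assume the divergence-theorem identity ∫_{ℝⁿ} div(∇f(x) ν(x)) dx = 0 holds. Then ∫_{ℝⁿ} ‖F(x)‖² ν(x) dx ≤ 2 FI(ν‖π) + 4 n L_f + 2 ∫_{ℝⁿ} ‖F(x) − ∇f(x)‖² ν(x) dx. -/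
open MeasureTheory Real

/-- Divergence of a vector field on `ℝⁿ`: `div V = ∑ i, ∂Vᵢ/∂xᵢ`. -/
noncomputable def diverg {n : ℕ}
    (V : EuclideanSpace ℝ (Fin n) → EuclideanSpace ℝ (Fin n))
    (x : EuclideanSpace ℝ (Fin n)) : ℝ :=
  ∑ i, fderiv ℝ V x (EuclideanSpace.single i (1 : ℝ)) i

/-- Relative Fisher information
`FI(ν‖π) = ∫ ‖∇log ν(x) − ∇log π(x)‖² ν(x) dx`. -/
noncomputable def fisherInfo {n : ℕ}
    (ν piD : EuclideanSpace ℝ (Fin n) → ℝ) : ℝ :=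
  ∫ x, ‖gradient (fun y => Real.log (ν y)) x
        - gradient (fun y => Real.log (piD y)) x‖ ^ 2 * ν x

set_option maxHeartbeats 1000000 in
theorem second_moment_bound_of_drift {n : ℕ} (hn : 1 ≤ n)
    (f : EuclideanSpace ℝ (Fin n) → ℝ) (hf : ContDiff ℝ 2 f)
    (Lf : ℝ) (hLf : 0 < Lf)
    (hflip : ∀ x y, ‖gradient f x - gradient f y‖ ≤ Lf * ‖x - y‖)
    (hexp_int : Integrable (fun x => Real.exp (-(f x))))
    (Z : ℝ) (hZ : Z = ∫ x, Real.exp (-(f x))) (hZpos : 0 < Z)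
    (piD : EuclideanSpace ℝ (Fin n) → ℝ)
    (hpiD : ∀ x, piD x = Real.exp (-(f x)) / Z)
    (ν : EuclideanSpace ℝ (Fin n) → ℝ)
    (hνpos : ∀ x, 0 < ν x) (hνC1 : ContDiff ℝ 1 ν)
    (hνprob : (∫ x, ν x) = 1)
    (F : EuclideanSpace ℝ (Fin n) → EuclideanSpace ℝ (Fin n))
    (hF : Measurable F)
    (hint1 : Integrable (fun x => ‖gradient f x‖ ^ 2 * ν x))
    (hint2 : Integrable (fun x => ‖gradient (fun y => Real.log (ν y)) x‖ ^ 2 * ν x))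
    (hint3 : Integrable (fun x => ‖F x - gradient f x‖ ^ 2 * ν x))
    (hdivthm : (∫ x, diverg (fun y => ν y • gradient f y) x) = 0) :
    (∫ x, ‖F x‖ ^ 2 * ν x)
      ≤ 2 * fisherInfo ν piD + 4 * n * Lf
        + 2 * ∫ x, ‖F x - gradient f x‖ ^ 2 * ν x := by
  classical
  set G := gradient f with hGdef
  set u := fun x => gradient (fun y => Real.log (ν y)) x with hudef
  have hfd : Differentiable ℝ f := hf.differentiable (by norm_num)
  have hνd : Differentiable ℝ ν := hνC1.differentiable one_ne_zero
  -- G is C¹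
  have hGC1 : ContDiff ℝ 1 G := by
    have h1 : ContDiff ℝ 1 (fderiv ℝ f) := hf.fderiv_right (by norm_num)
    exact ((InnerProductSpace.toDual ℝ (EuclideanSpace ℝ (Fin n))).symm.contDiff).comp h1
  have hGd : Differentiable ℝ G := hGC1.differentiable one_ne_zero
  -- Lipschitz bound on fderiv of G
  have hGlip : LipschitzWith (Real.toNNReal Lf) G := by
    apply LipschitzWith.of_dist_le_mul
    intro x y
    rw [dist_eq_norm, dist_eq_norm, Real.coe_toNNReal _ hLf.le]
    exact hflip x y
  have hDGle : ∀ x, ‖fderiv ℝ G x‖ ≤ Lf := fun x =>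
    le_trans (norm_fderiv_le_of_lipschitz ℝ hGlip) (le_of_eq (Real.coe_toNNReal _ hLf.le))
  -- the Laplacian
  set lap := fun x => ∑ i, fderiv ℝ G x (EuclideanSpace.single i (1 : ℝ)) i with hlapdef
  have hlap_bound : ∀ x, |lap x| ≤ (n : ℝ) * Lf := by
    intro x
    calc |lap x| ≤ ∑ i, |fderiv ℝ G x (EuclideanSpace.single i (1 : ℝ)) i| :=
          Finset.abs_sum_le_sum_abs _ _
      _ ≤ ∑ _i : Fin n, Lf := by
          refine Finset.sum_le_sum fun i _ => ?_
          have h1 : |fderiv ℝ G x (EuclideanSpace.single i (1 : ℝ)) i|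
              ≤ ‖fderiv ℝ G x (EuclideanSpace.single i (1 : ℝ))‖ := by
            have := abs_real_inner_le_norm (EuclideanSpace.single i (1 : ℝ))
              (fderiv ℝ G x (EuclideanSpace.single i (1 : ℝ)))
            simpa [EuclideanSpace.inner_single_left] using this
          refine h1.trans (((fderiv ℝ G x).le_opNorm _).trans ?_)
          rw [EuclideanSpace.norm_single, norm_one, mul_one]
          exact hDGle x
      _ = (n : ℝ) * Lf := by simp [Finset.sum_const, nsmul_eq_mul]
  -- fderiv of ν in terms of gradient
  have hfν : ∀ x v, fderiv ℝ ν x v = (inner ℝ (gradient ν x) v : ℝ) := by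
    intro x v
    have : fderiv ℝ ν x = InnerProductSpace.toDual ℝ _ (gradient ν x) :=
      ((InnerProductSpace.toDual ℝ (EuclideanSpace ℝ (Fin n))).apply_symm_apply
        (fderiv ℝ ν x)).symm
    rw [this, InnerProductSpace.toDual_apply_apply]
  -- gradient of log ν
  have hu_grad : ∀ x, HasGradientAt (fun y => Real.log (ν y)) ((ν x)⁻¹ • gradient ν x) x := by
    intro x
    rw [hasGradientAt_iff_hasFDerivAt]
    have h1 : HasFDerivAt ν (InnerProductSpace.toDual ℝ _ (gradient ν x)) x :=
      hasGradientAt_iff_hasFDerivAt.mp (hνd x).hasGradientAt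
    have h2 := (Real.hasDerivAt_log (hνpos x).ne').comp_hasFDerivAt x h1
    convert h2 using 1
    rfl
    rfl
    exact _root_.map_smul (InnerProductSpace.toDual ℝ (EuclideanSpace ℝ (Fin n))) _ _
  have hu_eq : ∀ x, u x = (ν x)⁻¹ • gradient ν x := fun x => (hu_grad x).gradient
  -- gradient of log piD
  have hlogpi : (fun y => Real.log (piD y)) = fun y => -f y - Real.log Z := by
    funext y
    rw [hpiD, Real.log_div (Real.exp_ne_zero _) hZpos.ne', Real.log_exp]
  have hgpi : ∀ x, gradient (fun y => Real.log (piD y)) x = -G x := by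
    intro x
    rw [hlogpi]
    have h1 : HasGradientAt (fun y => -f y - Real.log Z) (-G x) x := by
      rw [hasGradientAt_iff_hasFDerivAt, map_neg]
      exact (hasGradientAt_iff_hasFDerivAt.mp (hfd x).hasGradientAt).neg.sub_const _
    exact h1.gradient
  -- divergence pointwise identity
  have hdiv_eq : ∀ x, diverg (fun y => ν y • G y) x
      = ν x * lap x + (inner ℝ (gradient ν x) (G x) : ℝ) := by
    intro x
    unfold diverg
    rw [show (fderiv ℝ (fun y => ν y • G y) x)
        = ν x • fderiv ℝ G x + (fderiv ℝ ν x).smulRight (G x) from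
      fderiv_smul (hνd x) (hGd x)]
    simp only [ContinuousLinearMap.add_apply, ContinuousLinearMap.coe_smul',
      Pi.smul_apply, ContinuousLinearMap.smulRight_apply, PiLp.add_apply, PiLp.smul_apply,
      smul_eq_mul]
    rw [Finset.sum_add_distrib, Finset.mul_sum]
    congr 1
    rw [PiLp.inner_apply]
    refine Finset.sum_congr rfl fun i _ => ?_
    rw [hfν, EuclideanSpace.inner_single_right]
    simp [mul_comm]
  -- key pointwise relation: ⟪u x, G x⟫ * ν x = ⟪∇ν x, G x⟫
  have hinner_rel : ∀ x, (inner ℝ (u x) (G x) : ℝ) * ν x = (inner ℝ (gradient ν x) (G x) : ℝ) := by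
    intro x
    rw [hu_eq x, real_inner_smul_left, inv_mul_eq_div, div_mul_cancel₀ _ (hνpos x).ne']
  -- continuity facts
  have hgradν_cont : Continuous (fun x => gradient ν x) := by
    have h1 : Continuous (fderiv ℝ ν) := hνC1.continuous_fderiv one_ne_zero
    exact ((InnerProductSpace.toDual ℝ (EuclideanSpace ℝ (Fin n))).symm.continuous).comp h1
  have hG_cont : Continuous G := hGC1.continuous
  have hlap_cont : Continuous lap := by
    have h1 : Continuous (fderiv ℝ G) := hGC1.continuous_fderiv one_ne_zero
    refine continuous_finset_sum _ fun i _ => ?_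
    have h2 : Continuous fun x => fderiv ℝ G x (EuclideanSpace.single i (1 : ℝ)) :=
      ((ContinuousLinearMap.apply ℝ (EuclideanSpace ℝ (Fin n))
        (EuclideanSpace.single i (1 : ℝ))).continuous).comp h1
    exact (continuous_apply i).comp ((PiLp.continuous_ofLp _ _).comp h2)
  have hinner_cont : Continuous fun x => (inner ℝ (gradient ν x) (G x) : ℝ) :=
    hgradν_cont.inner hG_cont
  have hu_cont : Continuous u := by
    have : Continuous fun x => (ν x)⁻¹ • gradient ν x :=
      ((hνC1.continuous).inv₀ fun x => (hνpos x).ne').smul hgradν_cont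
    exact (funext hu_eq : u = _) ▸ this
  -- integrability facts
  have hν_int : Integrable ν := by
    by_contra h
    rw [integral_undef h] at hνprob
    norm_num at hνprob
  have hνlap_int : Integrable (fun x => ν x * lap x) := by
    refine Integrable.mono' (hν_int.const_mul ((n : ℝ) * Lf))
      (((hνC1.continuous).mul hlap_cont).aestronglyMeasurable) (Filter.Eventually.of_forall ?_)
    intro x
    rw [Real.norm_eq_abs, abs_mul, abs_of_pos (hνpos x)]
    calc ν x * |lap x| ≤ ν x * ((n : ℝ) * Lf) :=
          mul_le_mul_of_nonneg_left (hlap_bound x) (hνpos x).le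
      _ = (n : ℝ) * Lf * ν x := by ring
  have hu2_int : Integrable (fun x => ‖u x‖ ^ 2 * ν x) := hint2
  have hinner_int : Integrable (fun x => (inner ℝ (gradient ν x) (G x) : ℝ)) := by
    refine Integrable.mono' ((hu2_int.add hint1).const_mul (1/2 : ℝ))
      hinner_cont.aestronglyMeasurable (Filter.Eventually.of_forall ?_)
    intro x
    rw [← hinner_rel x, Real.norm_eq_abs, abs_mul, abs_of_pos (hνpos x)]
    have h1 : |(inner ℝ (u x) (G x) : ℝ)| ≤ ‖u x‖ * ‖G x‖ := abs_real_inner_le_norm _ _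
    have h2 : ‖u x‖ * ‖G x‖ ≤ (1/2) * (‖u x‖ ^ 2 + ‖G x‖ ^ 2) := by nlinarith [sq_nonneg (‖u x‖ - ‖G x‖)]
    calc |(inner ℝ (u x) (G x) : ℝ)| * ν x
        ≤ ((1/2) * (‖u x‖ ^ 2 + ‖G x‖ ^ 2)) * ν x :=
          mul_le_mul_of_nonneg_right (h1.trans h2) (hνpos x).le
      _ = (1/2) * (‖u x‖ ^ 2 * ν x + ‖G x‖ ^ 2 * ν x) := by ring
  -- divergence theorem consequence
  have hsplit : (∫ x, diverg (fun y => ν y • G y) x)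
      = (∫ x, ν x * lap x) + ∫ x, (inner ℝ (gradient ν x) (G x) : ℝ) := by
    rw [← integral_add hνlap_int hinner_int]
    exact integral_congr_ae (Filter.Eventually.of_forall fun x => hdiv_eq x)
  have hI2 : (∫ x, (inner ℝ (gradient ν x) (G x) : ℝ)) = -(∫ x, ν x * lap x) := by
    rw [hdivthm] at hsplit
    linarith
  have hIlap_le : (∫ x, ν x * lap x) ≤ (n : ℝ) * Lf := by
    calc (∫ x, ν x * lap x) ≤ ∫ x, (n : ℝ) * Lf * ν x := by
          refine integral_mono hνlap_int (hν_int.const_mul _) fun x => ?_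
          calc ν x * lap x ≤ ν x * |lap x| :=
                mul_le_mul_of_nonneg_left (le_abs_self _) (hνpos x).le
            _ ≤ ν x * ((n : ℝ) * Lf) := mul_le_mul_of_nonneg_left (hlap_bound x) (hνpos x).le
            _ = (n : ℝ) * Lf * ν x := by ring
      _ = (n : ℝ) * Lf := by rw [integral_const_mul, hνprob, mul_one]
  -- Fisher information identity
  have hFI : fisherInfo ν piD
      = (∫ x, ‖u x‖ ^ 2 * ν x) + 2 * (∫ x, (inner ℝ (gradient ν x) (G x) : ℝ))
        + ∫ x, ‖G x‖ ^ 2 * ν x := by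
    unfold fisherInfo
    have hpt : ∀ x, ‖gradient (fun y => Real.log (ν y)) x
          - gradient (fun y => Real.log (piD y)) x‖ ^ 2 * ν x
        = ‖u x‖ ^ 2 * ν x + 2 * (inner ℝ (gradient ν x) (G x) : ℝ) + ‖G x‖ ^ 2 * ν x := by
      intro x
      rw [hgpi x, sub_neg_eq_add]
      rw [show (gradient (fun y => Real.log (ν y)) x) = u x from rfl]
      rw [norm_add_sq_real]
      rw [← hinner_rel x]
      ring
    have haux1 : Integrable (fun x => 2 * (inner ℝ (gradient ν x) (G x) : ℝ)) :=
      hinner_int.const_mul 2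
    have haux2 : Integrable (fun x => ‖u x‖ ^ 2 * ν x
        + 2 * (inner ℝ (gradient ν x) (G x) : ℝ)) := by
      exact hu2_int.add haux1
    rw [integral_congr_ae (Filter.Eventually.of_forall hpt),
      integral_add haux2 hint1, integral_add hu2_int haux1, integral_const_mul]
  -- second moment of G
  have hu2_nonneg : 0 ≤ ∫ x, ‖u x‖ ^ 2 * ν x :=
    integral_nonneg fun x => mul_nonneg (by positivity) (hνpos x).le
  have hG2_le : (∫ x, ‖G x‖ ^ 2 * ν x) ≤ fisherInfo ν piD + 2 * ((n : ℝ) * Lf) := by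
    have h1 : (∫ x, ‖G x‖ ^ 2 * ν x)
        = fisherInfo ν piD - (∫ x, ‖u x‖ ^ 2 * ν x) + 2 * (∫ x, ν x * lap x) := by
      rw [hFI, hI2]; ring
    rw [h1]
    have := hIlap_le
    linarith
  -- final bound
  have hF2_int : Integrable (fun x => ‖F x‖ ^ 2 * ν x) := by
    refine Integrable.mono' (((hint3.add hint1).const_mul 2))
      ?_ (Filter.Eventually.of_forall ?_)
    · exact (((hF.norm.pow_const 2).mul hνC1.continuous.measurable).aestronglyMeasurable)
    · intro x
      rw [Real.norm_eq_abs, abs_of_nonneg (mul_nonneg (by positivity) (hνpos x).le)]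
      have h1 : ‖F x‖ ≤ ‖F x - G x‖ + ‖G x‖ := by
        simpa using norm_add_le (F x - G x) (G x)
      have h2 : ‖F x‖ ^ 2 ≤ 2 * ‖F x - G x‖ ^ 2 + 2 * ‖G x‖ ^ 2 := by
        nlinarith [norm_nonneg (F x), norm_nonneg (F x - G x), norm_nonneg (G x),
          sq_nonneg (‖F x - G x‖ - ‖G x‖)]
      calc ‖F x‖ ^ 2 * ν x ≤ (2 * ‖F x - G x‖ ^ 2 + 2 * ‖G x‖ ^ 2) * ν x :=
            mul_le_mul_of_nonneg_right h2 (hνpos x).le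
        _ = 2 * (‖F x - G x‖ ^ 2 * ν x + ‖G x‖ ^ 2 * ν x) := by ring
  have hmain : (∫ x, ‖F x‖ ^ 2 * ν x)
      ≤ 2 * (∫ x, ‖F x - G x‖ ^ 2 * ν x) + 2 * ∫ x, ‖G x‖ ^ 2 * ν x := by
    have h1 : (∫ x, ‖F x‖ ^ 2 * ν x)
        ≤ ∫ x, (2 * (‖F x - G x‖ ^ 2 * ν x) + 2 * (‖G x‖ ^ 2 * ν x)) := by
      refine integral_mono hF2_int ((hint3.const_mul 2).add (hint1.const_mul 2)) fun x => ?_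
      have h2 : ‖F x‖ ^ 2 ≤ 2 * ‖F x - G x‖ ^ 2 + 2 * ‖G x‖ ^ 2 := by
        nlinarith [norm_nonneg (F x), sq_nonneg (‖F x - G x‖ - ‖G x‖),
          (by simpa using norm_add_le (F x - G x) (G x) : ‖F x‖ ≤ ‖F x - G x‖ + ‖G x‖)]
      calc ‖F x‖ ^ 2 * ν x ≤ (2 * ‖F x - G x‖ ^ 2 + 2 * ‖G x‖ ^ 2) * ν x :=
            mul_le_mul_of_nonneg_right h2 (hνpos x).le
        _ = 2 * (‖F x - G x‖ ^ 2 * ν x) + 2 * (‖G x‖ ^ 2 * ν x) := by ring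
    rw [integral_add (hint3.const_mul 2) (hint1.const_mul 2), integral_const_mul,
      integral_const_mul] at h1
    exact h1
  calc (∫ x, ‖F x‖ ^ 2 * ν x)
      ≤ 2 * (∫ x, ‖F x - G x‖ ^ 2 * ν x) + 2 * ∫ x, ‖G x‖ ^ 2 * ν x := hmain
    _ ≤ 2 * (∫ x, ‖F x - G x‖ ^ 2 * ν x)
        + 2 * (fisherInfo ν piD + 2 * ((n : ℝ) * Lf)) := by linarith [hG2_le]
    _ = 2 * fisherInfo ν piD + 4 * (n : ℝ) * Lf
        + 2 * ∫ x, ‖F x - G x‖ ^ 2 * ν x := by ring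
end

section
/- Let n ≥ 1, let p : ℝⁿ → [0, ∞) be a measurable probability density (∫ p = 1), let σ > 0, and let p_σ(x) = ∫_{ℝⁿ} p(z) φ_σ(x − z) dz be the Gaussian-smoothed density. Then p_σ is differentiable at every x ∈ ℝⁿ, the integral ∫ (z − x) p(z) φ_σ(x − z) dz converges absolutely, and σ² ∇p_σ(x) = ∫_{ℝⁿ} (z − x) p(z) φ_σ(x − z) dz for all x. In particular, since p_σ(x) > 0 everywhere, Tweedie's formula holds: σ² ∇log p_σ(x) = (∫ z p(z) φ_σ(x − z) dz) / p_σ(x) − x. -/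
open MeasureTheory Real

/-- Density of the Gaussian `N(0, σ²I)` on `ℝⁿ`:
`φ_σ(u) = (2πσ²)^{−n/2} exp(−‖u‖²/(2σ²))`. -/
noncomputable def gaussDensity (n : ℕ) (σ : ℝ)
    (u : EuclideanSpace ℝ (Fin n)) : ℝ :=
  (2 * Real.pi * σ ^ 2) ^ (-(n : ℝ) / 2) * Real.exp (-‖u‖ ^ 2 / (2 * σ ^ 2))

lemma aux_texp {σ t : ℝ} (hσ : 0 < σ) (ht : 0 ≤ t) : t * Real.exp (-t^2 / (2*σ^2)) ≤ 2*σ := by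
  rcases le_or_gt t (2*σ) with h | h
  · calc t * Real.exp (-t^2 / (2*σ^2)) ≤ t * 1 := by
          gcongr
          exact Real.exp_le_one_iff.mpr
            (div_nonpos_of_nonpos_of_nonneg (neg_nonpos.mpr (sq_nonneg t)) (by positivity))
        _ ≤ 2*σ := by linarith
  · have ht0 : 0 < t := lt_trans (by positivity) h
    have h1 : t^2/(2*σ^2) + 1 ≤ Real.exp (t^2/(2*σ^2)) := Real.add_one_le_exp _
    have hA : 0 < Real.exp (t^2/(2*σ^2)) := Real.exp_pos _
    have h1' : t^2 + 2*σ^2 ≤ Real.exp (t^2/(2*σ^2)) * (2*σ^2) := by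
      have h4 := mul_le_mul_of_nonneg_right h1 (show (0:ℝ) ≤ 2*σ^2 by positivity)
      rwa [add_mul, one_mul, div_mul_cancel₀] at h4
      positivity
    have h2 : Real.exp (-t^2/(2*σ^2)) = (Real.exp (t^2/(2*σ^2)))⁻¹ := by
      rw [← Real.exp_neg]; ring_nf
    have h3 : t ≤ 2*σ * Real.exp (t^2/(2*σ^2)) := by
      nlinarith [h1', mul_pos hσ ht0, sq_nonneg (t-σ)]
    rw [h2]
    calc t * (Real.exp (t^2/(2*σ^2)))⁻¹
        ≤ (2*σ * Real.exp (t^2/(2*σ^2))) * (Real.exp (t^2/(2*σ^2)))⁻¹ := by gcongr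
      _ = 2*σ := by field_simp

lemma gauss_hasFDerivAt {n : ℕ} {σ : ℝ} (hσ : 0 < σ) (z x : EuclideanSpace ℝ (Fin n)) :
    HasFDerivAt (fun y => gaussDensity n σ (y - z))
      (innerSL ℝ (((σ^2)⁻¹ * gaussDensity n σ (x - z)) • (z - x))) x := by
  have h1 : HasFDerivAt (fun y : EuclideanSpace ℝ (Fin n) => ‖y - z‖ ^ 2)
      (2 • (innerSL ℝ (x - z)).comp (ContinuousLinearMap.id ℝ _)) x := by
    simpa using ((hasFDerivAt_id x).sub_const z).norm_sq
  have h2 : HasFDerivAt (fun y : EuclideanSpace ℝ (Fin n) => -‖y - z‖ ^ 2 / (2 * σ ^ 2))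
      ((-(2 * σ ^ 2)⁻¹) • (2 • (innerSL ℝ (x - z)).comp (ContinuousLinearMap.id ℝ _))) x := by
    have heq : (fun y : EuclideanSpace ℝ (Fin n) => -‖y - z‖ ^ 2 / (2 * σ ^ 2))
        = fun y => (-(2 * σ ^ 2)⁻¹) • ‖y - z‖ ^ 2 := by
      funext y; simp only [smul_eq_mul]; ring
    rw [heq]; exact h1.const_smul (-(2 * σ ^ 2)⁻¹ : ℝ)
  have h3 := h2.exp
  have h4 := h3.const_mul ((2 * Real.pi * σ ^ 2) ^ (-(n : ℝ) / 2))
  refine h4.congr_fderiv ?_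
  ext v
  simp only [gaussDensity, ContinuousLinearMap.coe_smul', Pi.smul_apply,
    ContinuousLinearMap.coe_comp', Function.comp_apply, ContinuousLinearMap.coe_id', id_eq,
    innerSL_apply_apply, smul_eq_mul, real_inner_smul_left]
  have : (inner ℝ (z - x) v : ℝ) = -(inner ℝ (x - z) v : ℝ) := by
    rw [show z - x = -(x - z) by abel, inner_neg_left]
  rw [this]
  have hσ2 : σ ^ 2 ≠ 0 := by positivity
  field_simp
  ring

lemma gauss_continuous (n : ℕ) (σ : ℝ) : Continuous (gaussDensity n σ) := by
  unfold gaussDensity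
  exact continuous_const.mul (Real.continuous_exp.comp (by continuity))

theorem tweedie_formula {n : ℕ} (hn : 1 ≤ n)
    (p : EuclideanSpace ℝ (Fin n) → ℝ) (hp : Measurable p)
    (hp0 : ∀ z, 0 ≤ p z) (hp1 : (∫ z, p z) = 1)
    (σ : ℝ) (hσ : 0 < σ)
    (pσ : EuclideanSpace ℝ (Fin n) → ℝ)
    (hpσ : ∀ x, pσ x = ∫ z, p z * gaussDensity n σ (x - z)) :
    ∀ x : EuclideanSpace ℝ (Fin n),
      DifferentiableAt ℝ pσ x ∧
      Integrable (fun z => (p z * gaussDensity n σ (x - z)) • (z - x)) ∧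
      σ ^ 2 • gradient pσ x = ∫ z, (p z * gaussDensity n σ (x - z)) • (z - x) ∧
      0 < pσ x ∧
      σ ^ 2 • gradient (fun y => Real.log (pσ y)) x
        = (pσ x)⁻¹ • (∫ z, (p z * gaussDensity n σ (x - z)) • z) - x := by
  intro x
  let E := EuclideanSpace ℝ (Fin n)
  set C : ℝ := (2 * Real.pi * σ ^ 2) ^ (-(n : ℝ) / 2) with hC_def
  have hσ2 : (0:ℝ) < σ ^ 2 := by positivity
  have hC : 0 < C := by
    apply Real.rpow_pos_of_pos; positivity
  -- basic facts about gaussDensity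
  have hgpos : ∀ u : E, 0 < gaussDensity n σ u := fun u =>
    mul_pos hC (Real.exp_pos _)
  have hgle : ∀ u : E, gaussDensity n σ u ≤ C := by
    intro u
    have : Real.exp (-‖u‖ ^ 2 / (2 * σ ^ 2)) ≤ 1 :=
      Real.exp_le_one_iff.mpr
        (div_nonpos_of_nonpos_of_nonneg (neg_nonpos.mpr (sq_nonneg _)) (by positivity))
    calc gaussDensity n σ u = C * Real.exp (-‖u‖ ^ 2 / (2 * σ ^ 2)) := rfl
      _ ≤ C * 1 := by gcongr
      _ = C := mul_one C
  have hgnorm : ∀ u : E, ‖u‖ * gaussDensity n σ u ≤ C * (2 * σ) := by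
    intro u
    have := aux_texp hσ (norm_nonneg u)
    calc ‖u‖ * gaussDensity n σ u = C * (‖u‖ * Real.exp (-‖u‖ ^ 2 / (2 * σ ^ 2))) := by
          unfold gaussDensity; ring
      _ ≤ C * (2 * σ) := by gcongr
  -- integrability of p
  have hpint : Integrable p := by
    by_contra h
    rw [integral_undef h] at hp1
    norm_num at hp1
  -- measurability
  have hgm : ∀ y : E, Measurable (fun z : E => gaussDensity n σ (y - z)) := fun y =>
    ((gauss_continuous n σ).comp (continuous_const.sub continuous_id)).measurable
  have hFm : ∀ y : E, Measurable (fun z : E => p z * gaussDensity n σ (y - z)) := fun y =>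
    hp.mul (hgm y)
  -- integrability of the smoothed integrand
  have hF_int : ∀ y : E, Integrable (fun z : E => p z * gaussDensity n σ (y - z)) := by
    intro y
    apply Integrable.mono' (hpint.const_mul C) (hFm y).aestronglyMeasurable
    filter_upwards with z
    rw [Real.norm_eq_abs, abs_of_nonneg (mul_nonneg (hp0 z) (hgpos _).le)]
    calc p z * gaussDensity n σ (y - z) ≤ p z * C := by
          have := hgle (y - z); gcongr; exact hp0 z
      _ = C * p z := mul_comm _ _
  -- integrability of the vector-valued integrand
  have hv_meas : ∀ y : E, AEStronglyMeasurable
      (fun z : E => (p z * gaussDensity n σ (y - z)) • (z - y)) := by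
    intro y
    exact ((hFm y).aestronglyMeasurable.smul
      ((measurable_id.sub measurable_const).aestronglyMeasurable))
  have hv_int : ∀ y : E, Integrable (fun z : E => (p z * gaussDensity n σ (y - z)) • (z - y)) := by
    intro y
    apply Integrable.mono' (hpint.const_mul (C * (2 * σ))) (hv_meas y)
    filter_upwards with z
    rw [norm_smul, Real.norm_eq_abs, abs_of_nonneg (mul_nonneg (hp0 z) (hgpos _).le)]
    have h1 : ‖z - y‖ * gaussDensity n σ (y - z) ≤ C * (2 * σ) := by
      have := hgnorm (y - z)
      rwa [norm_sub_rev] at this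
    calc p z * gaussDensity n σ (y - z) * ‖z - y‖
        = p z * (‖z - y‖ * gaussDensity n σ (y - z)) := by ring
      _ ≤ p z * (C * (2 * σ)) := by gcongr; exact hp0 z
      _ = C * (2 * σ) * p z := mul_comm _ _
  -- positivity of pσ
  have hpσpos : ∀ y : E, 0 < pσ y := by
    intro y
    rw [hpσ y]
    rw [integral_pos_iff_support_of_nonneg
      (fun z => mul_nonneg (hp0 z) (hgpos _).le) (hF_int y)]
    have hsupp : (Function.support fun z : E => p z * gaussDensity n σ (y - z))
        = Function.support p := by
      ext z
      simp only [Function.mem_support, mul_ne_zero_iff]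
      constructor
      · exact fun h => h.1
      · exact fun h => ⟨h, (hgpos (y - z)).ne'⟩
    rw [hsupp]
    have := (integral_pos_iff_support_of_nonneg hp0 hpint).mp (by rw [hp1]; norm_num)
    exact this
  -- the derivative
  have key : HasFDerivAt pσ
      (innerSL ℝ ((σ^2)⁻¹ • ∫ z, (p z * gaussDensity n σ (x - z)) • (z - x))) x := by
    have hεpos : (0:ℝ) < 1 := one_pos
    have main := hasFDerivAt_integral_of_dominated_of_fderiv_le
      (F := fun (y : E) (z : E) => p z * gaussDensity n σ (y - z))
      (F' := fun (y : E) (z : E) =>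
        innerSL ℝ (((σ^2)⁻¹ * (p z * gaussDensity n σ (y - z))) • (z - y)))
      (x₀ := x) (bound := fun z => (σ^2)⁻¹ * (C * (2 * σ)) * p z)
      (Metric.ball_mem_nhds x hεpos)
      (Filter.Eventually.of_forall fun y => (hFm y).aestronglyMeasurable)
      (hF_int x)
      (by
        apply Continuous.comp_aestronglyMeasurable (innerSL ℝ).continuous
        refine AEStronglyMeasurable.smul (f := fun z => (σ^2)⁻¹ * (p z * gaussDensity n σ (x - z)))
          (g := fun z => z - x) ?_ ?_
        · exact (measurable_const.mul (hFm x)).aestronglyMeasurable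
        · exact (measurable_id.sub measurable_const).aestronglyMeasurable)
      (by
        filter_upwards with z y hy
        rw [innerSL_apply_norm, norm_smul, Real.norm_eq_abs,
          abs_of_nonneg (mul_nonneg (by positivity) (mul_nonneg (hp0 z) (hgpos _).le))]
        have h1 : ‖z - y‖ * gaussDensity n σ (y - z) ≤ C * (2 * σ) := by
          have := hgnorm (y - z); rwa [norm_sub_rev] at this
        calc (σ^2)⁻¹ * (p z * gaussDensity n σ (y - z)) * ‖z - y‖
            = (σ^2)⁻¹ * (p z * (‖z - y‖ * gaussDensity n σ (y - z))) := by ring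
          _ ≤ (σ^2)⁻¹ * (p z * (C * (2 * σ))) := by
              gcongr
              exact hp0 z
          _ = (σ^2)⁻¹ * (C * (2 * σ)) * p z := by ring)
      ((hpint.const_mul _))
      (by
        filter_upwards with z y hy
        have hd := (gauss_hasFDerivAt (n := n) hσ z y).const_mul (p z)
        refine hd.congr_fderiv ?_
        rw [← _root_.map_smul, smul_smul]
        congr 1
        ring)
    have hpσeq : pσ = fun y => ∫ z, p z * gaussDensity n σ (y - z) := funext hpσ
    have hw_eq : (fun z : E => ((σ^2)⁻¹ * (p z * gaussDensity n σ (x - z))) • (z - x))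
        = fun z : E => (σ^2)⁻¹ • ((p z * gaussDensity n σ (x - z)) • (z - x)) := by
      funext z; rw [smul_smul]
    have hw_int : Integrable
        (fun z : E => ((σ^2)⁻¹ * (p z * gaussDensity n σ (x - z))) • (z - x)) := by
      rw [hw_eq]; exact (hv_int x).smul ((σ^2)⁻¹ : ℝ)
    have main' : HasFDerivAt (fun y : E => ∫ z, p z * gaussDensity n σ (y - z))
        (∫ a, innerSL ℝ (((σ^2)⁻¹ * (p a * gaussDensity n σ (x - a))) • (a - x))) x := main
    have heq2 : (∫ a, innerSL ℝ (((σ^2)⁻¹ * (p a * gaussDensity n σ (x - a))) • (a - x)))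
        = innerSL ℝ ((σ^2)⁻¹ • ∫ z, (p z * gaussDensity n σ (x - z)) • (z - x)) := by
      rw [ContinuousLinearMap.integral_comp_comm (innerSL ℝ) hw_int, hw_eq, integral_smul]
    rw [hpσeq]
    rw [heq2] at main'
    exact main'
  set I : E := ∫ z, (p z * gaussDensity n σ (x - z)) • (z - x) with hI_def
  have hgrad : HasGradientAt pσ ((σ^2)⁻¹ • I) x := by
    rw [hasGradientAt_iff_hasFDerivAt]
    exact key
  have hgradval : gradient pσ x = (σ^2)⁻¹ • I := hgrad.gradient
  have hσ2ne : (σ:ℝ)^2 ≠ 0 := hσ2.ne'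
  have hmain3 : σ ^ 2 • gradient pσ x = I := by
    rw [hgradval, smul_smul, mul_inv_cancel₀ hσ2ne, one_smul]
  -- log gradient
  have hlog : HasGradientAt (fun y => Real.log (pσ y)) ((pσ x)⁻¹ • ((σ^2)⁻¹ • I)) x := by
    rw [hasGradientAt_iff_hasFDerivAt]
    have hd := (Real.hasDerivAt_log (hpσpos x).ne').comp_hasFDerivAt x key
    refine hd.congr_fderiv ?_
    ext v
    simp [InnerProductSpace.toDual_apply_apply, real_inner_smul_left]
  have hlogval : gradient (fun y => Real.log (pσ y)) x = (pσ x)⁻¹ • ((σ^2)⁻¹ • I) :=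
    hlog.gradient
  -- integrability of (p z * g) • z
  have hvz_int : Integrable (fun z : E => (p z * gaussDensity n σ (x - z)) • z) := by
    have : (fun z : E => (p z * gaussDensity n σ (x - z)) • z)
        = fun z => (p z * gaussDensity n σ (x - z)) • (z - x)
          + (p z * gaussDensity n σ (x - z)) • x := by
      funext z; rw [← smul_add]; congr 1; abel
    rw [this]
    exact (hv_int x).add ((hF_int x).smul_const x)
  have hIsplit : I = (∫ z, (p z * gaussDensity n σ (x - z)) • z) - pσ x • x := by
    rw [hI_def]
    have : (fun z : E => (p z * gaussDensity n σ (x - z)) • (z - x))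
        = fun z => (p z * gaussDensity n σ (x - z)) • z
          - (p z * gaussDensity n σ (x - z)) • x := by
      funext z; rw [← smul_sub]
    rw [this, integral_sub hvz_int ((hF_int x).smul_const x), integral_smul_const, hpσ x]
  refine ⟨key.differentiableAt, hv_int x, hmain3, hpσpos x, ?_⟩
  rw [hlogval, smul_smul, smul_smul, mul_comm (σ^2), mul_assoc,
    mul_inv_cancel₀ hσ2ne, mul_one, hIsplit, smul_sub, smul_smul,
    inv_mul_cancel₀ (hpσpos x).ne', one_smul]
end

section
/- Let n ≥ 1 and σ > 0. Let f : ℝⁿ → ℝ be twice continuously differentiable with ∇f Lipschitz with constant L_f > 0, let Z = ∫ e^{−f(x)} dx ∈ (0, ∞) and π(x) = e^{−f(x)}/Z, and let ν : ℝⁿ → ℝ be an everywhere positive, continuously differentiable probability density with ∫ ‖∇f‖² ν < ∞ and ∫ ‖∇log ν‖² ν < ∞, satisfying ∫_{ℝⁿ} div(∇f(x) ν(x)) dx = 0. Let g : ℝⁿ → ℝ be differentiable, let p : ℝⁿ → (0, ∞) be positive and differentiable with ∇f = ∇g − ∇log p, let S : ℝⁿ → ℝⁿ satisfy ‖S(y)‖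 ≤ R_s for all y, let q_σ : ℝⁿ → ℝⁿ satisfy ‖S(y) − q_σ(y)‖ ≤ ε_σ and ‖q_σ(y) − ∇log p(y)‖ ≤ σ C for all y, and let α ≥ 1. Then the annealed PMC-RED drift G_α(x) = ∇g(x) − α S(x) satisfies ∫_{ℝⁿ} ‖G_α(x)‖² ν(x) dx ≤ 2 FI(ν‖π) + 4 n L_f + 2 (σ C + ε_σ + (α − 1) R_s)². -/
set_option maxHeartbeats 1000000
set_option synthInstance.maxHeartbeats 400000

open MeasureTheory Real

section aux
variable {n : ℕ}

lemma inner_gradient_eq (f : EuclideanSpace ℝ (Fin n) → ℝ) (x v : EuclideanSpace ℝ (Fin n)) :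
    (inner ℝ (gradient f x) v : ℝ) = fderiv ℝ f x v :=
  InnerProductSpace.toDual_symm_apply

lemma gradient_log_eq (ν : EuclideanSpace ℝ (Fin n) → ℝ) (x : EuclideanSpace ℝ (Fin n))
    (hx : 0 < ν x) (hd : DifferentiableAt ℝ ν x) :
    gradient (fun y => Real.log (ν y)) x = (ν x)⁻¹ • gradient ν x := by
  have h : HasFDerivAt (fun y => Real.log (ν y)) ((ν x)⁻¹ • fderiv ℝ ν x) x :=
    (Real.hasDerivAt_log hx.ne').comp_hasFDerivAt x hd.hasFDerivAt
  unfold gradient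
  rw [h.fderiv, LinearIsometryEquiv.map_smul]

lemma gradient_log_piD (f : EuclideanSpace ℝ (Fin n) → ℝ) (Z : ℝ) (hZpos : 0 < Z)
    (piD : EuclideanSpace ℝ (Fin n) → ℝ)
    (hpiD : ∀ x, piD x = Real.exp (-(f x)) / Z) (x : EuclideanSpace ℝ (Fin n)) :
    gradient (fun y => Real.log (piD y)) x = - gradient f x := by
  have heq : (fun y => Real.log (piD y)) = fun y => -(f y) - Real.log Z := by
    funext y; rw [hpiD y, Real.log_div (Real.exp_ne_zero _) hZpos.ne', Real.log_exp]
  rw [heq]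
  unfold gradient
  rw [fderiv_sub_const, fderiv_fun_neg]; exact map_neg _ _

lemma coord_abs_le_norm (v : EuclideanSpace ℝ (Fin n)) (i : Fin n) : |v i| ≤ ‖v‖ := by
  have h1 : (inner ℝ (EuclideanSpace.single i (1:ℝ)) v : ℝ) = v i := by
    simp [EuclideanSpace.inner_single_left]
  have h2 := abs_real_inner_le_norm (EuclideanSpace.single i (1:ℝ)) v
  rw [h1, EuclideanSpace.norm_single] at h2
  simpa using h2

lemma contDiff_gradient (f : EuclideanSpace ℝ (Fin n) → ℝ) (hf : ContDiff ℝ 2 f) :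
    ContDiff ℝ 1 (gradient f) := by
  have h1 : ContDiff ℝ 1 (fderiv ℝ f) := hf.fderiv_right (by norm_num)
  exact (InnerProductSpace.toDual ℝ (EuclideanSpace ℝ (Fin n))).symm.contDiff.comp h1

lemma laplacian_abs_le (f : EuclideanSpace ℝ (Fin n) → ℝ) (Lf : ℝ) (hLf : 0 ≤ Lf)
    (hflip : ∀ x y, ‖gradient f x - gradient f y‖ ≤ Lf * ‖x - y‖)
    (x : EuclideanSpace ℝ (Fin n)) :
    |diverg (gradient f) x| ≤ n * Lf := by
  have hlip : LipschitzWith (Real.toNNReal Lf) (gradient f) :=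
    LipschitzWith.of_dist_le_mul fun a b => by
      simpa [dist_eq_norm, Real.coe_toNNReal Lf hLf] using hflip a b
  have hnorm : ‖fderiv ℝ (gradient f) x‖ ≤ Lf := by
    have h := norm_fderiv_le_of_lipschitz ℝ hlip (x₀ := x)
    rwa [Real.coe_toNNReal Lf hLf] at h
  have hterm : ∀ i : Fin n, |fderiv ℝ (gradient f) x (EuclideanSpace.single i (1:ℝ)) i| ≤ Lf := by
    intro i
    refine (coord_abs_le_norm _ i).trans ?_
    calc ‖fderiv ℝ (gradient f) x (EuclideanSpace.single i (1:ℝ))‖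
        ≤ ‖fderiv ℝ (gradient f) x‖ * ‖EuclideanSpace.single i (1:ℝ)‖ :=
          (fderiv ℝ (gradient f) x).le_opNorm _
      _ ≤ Lf := by rw [EuclideanSpace.norm_single]; simp only [norm_one, mul_one]; exact hnorm
  calc |diverg (gradient f) x| ≤ ∑ i : Fin n, |fderiv ℝ (gradient f) x (EuclideanSpace.single i (1:ℝ)) i| :=
        Finset.abs_sum_le_sum_abs _ _
    _ ≤ ∑ _i : Fin n, Lf := Finset.sum_le_sum fun i _ => hterm i
    _ = n * Lf := by simp [mul_comm]

lemma sum_clm_coord (ℓ : EuclideanSpace ℝ (Fin n) →L[ℝ] ℝ) (v : EuclideanSpace ℝ (Fin n)) :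
    ∑ i, ℓ (EuclideanSpace.single i (1:ℝ)) * v i = ℓ v := by
  have hv : ∑ i, v i • EuclideanSpace.single i (1:ℝ) = v := by
    have h := (EuclideanSpace.basisFun (Fin n) ℝ).sum_repr v
    simpa [EuclideanSpace.basisFun_apply, EuclideanSpace.basisFun_repr] using h
  calc ∑ i, ℓ (EuclideanSpace.single i (1:ℝ)) * v i
      = ∑ i, ℓ (v i • EuclideanSpace.single i (1:ℝ)) := by
        simp only [_root_.map_smul, smul_eq_mul, mul_comm]
    _ = ℓ (∑ i, v i • EuclideanSpace.single i (1:ℝ)) := (map_sum ℓ _ _).symm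
    _ = ℓ v := by rw [hv]

lemma diverg_smul_grad (ν f : EuclideanSpace ℝ (Fin n) → ℝ)
    (hν : Differentiable ℝ ν) (hF : Differentiable ℝ (gradient f))
    (x : EuclideanSpace ℝ (Fin n)) :
    diverg (fun y => ν y • gradient f y) x
      = fderiv ℝ ν x (gradient f x) + ν x * diverg (gradient f) x := by
  unfold diverg
  rw [fderiv_fun_smul (hν x) (hF x)]
  simp only [ContinuousLinearMap.add_apply, ContinuousLinearMap.coe_smul',
    Pi.smul_apply, ContinuousLinearMap.smulRight_apply, PiLp.add_apply,
    PiLp.smul_apply, smul_eq_mul]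
  rw [Finset.sum_add_distrib, Finset.mul_sum, sum_clm_coord]
  ring

end aux

theorem apmc_red_drift_second_moment_bound {n : ℕ} (hn : 1 ≤ n)
    (σ : ℝ) (hσ : 0 < σ)
    (f : EuclideanSpace ℝ (Fin n) → ℝ) (hf : ContDiff ℝ 2 f)
    (Lf : ℝ) (hLf : 0 < Lf)
    (hflip : ∀ x y, ‖gradient f x - gradient f y‖ ≤ Lf * ‖x - y‖)
    (hexp_int : Integrable (fun x => Real.exp (-(f x))))
    (Z : ℝ) (hZ : Z = ∫ x, Real.exp (-(f x))) (hZpos : 0 < Z)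
    (piD : EuclideanSpace ℝ (Fin n) → ℝ)
    (hpiD : ∀ x, piD x = Real.exp (-(f x)) / Z)
    (ν : EuclideanSpace ℝ (Fin n) → ℝ)
    (hνpos : ∀ x, 0 < ν x) (hνC1 : ContDiff ℝ 1 ν)
    (hνprob : (∫ x, ν x) = 1)
    (hint1 : Integrable (fun x => ‖gradient f x‖ ^ 2 * ν x))
    (hint2 : Integrable (fun x => ‖gradient (fun y => Real.log (ν y)) x‖ ^ 2 * ν x))
    (hdivthm : (∫ x, diverg (fun y => ν y • gradient f y) x) = 0)
    (g : EuclideanSpace ℝ (Fin n) → ℝ) (hg : Differentiable ℝ g)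
    (p : EuclideanSpace ℝ (Fin n) → ℝ)
    (hppos : ∀ x, 0 < p x) (hpd : Differentiable ℝ p)
    (hgradf : ∀ x, gradient f x
      = gradient g x - gradient (fun y => Real.log (p y)) x)
    (S qσ : EuclideanSpace ℝ (Fin n) → EuclideanSpace ℝ (Fin n))
    (Rs εσ C α : ℝ)
    (hRs : ∀ y, ‖S y‖ ≤ Rs)
    (happrox : ∀ y, ‖S y - qσ y‖ ≤ εσ)
    (hmis : ∀ y, ‖qσ y - gradient (fun u => Real.log (p u)) y‖ ≤ σ * C)
    (hα : 1 ≤ α) :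
    (∫ x, ‖gradient g x - α • S x‖ ^ 2 * ν x)
      ≤ 2 * fisherInfo ν piD + 4 * n * Lf
        + 2 * (σ * C + εσ + (α - 1) * Rs) ^ 2 := by
  classical
  have hνd : Differentiable ℝ ν := hνC1.differentiable one_ne_zero
  have hFcd : ContDiff ℝ 1 (gradient f) := contDiff_gradient f hf
  have hFd : Differentiable ℝ (gradient f) := hFcd.differentiable one_ne_zero
  have hFc : Continuous (gradient f) := hFcd.continuous
  have cont_ν : Continuous ν := hνC1.continuous
  have cont_fν : Continuous (fderiv ℝ ν) := (hνC1.fderiv_right (m := 0) (by norm_num)).continuous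
  have cont_w : Continuous (fun x => fderiv ℝ ν x (gradient f x)) := cont_fν.clm_apply hFc
  have cont_gradν : Continuous (gradient ν) :=
    (InnerProductSpace.toDual ℝ (EuclideanSpace ℝ (Fin n))).symm.continuous.comp cont_fν
  have hu_eq : ∀ x, gradient (fun y => Real.log (ν y)) x = (ν x)⁻¹ • gradient ν x :=
    fun x => gradient_log_eq ν x (hνpos x) (hνd x)
  have cont_u : Continuous (fun x => gradient (fun y => Real.log (ν y)) x) := by
    have h : (fun x => gradient (fun y => Real.log (ν y)) x)
        = fun x => (ν x)⁻¹ • gradient ν x := funext hu_eq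
    rw [h]
    exact (cont_ν.inv₀ fun x => (hνpos x).ne').smul cont_gradν
  have cont_A : Continuous (fderiv ℝ (gradient f)) := (hFcd.fderiv_right (m := 0) (by norm_num)).continuous
  have cont_Δ : Continuous (diverg (gradient f)) := by
    unfold diverg
    exact continuous_finset_sum _ fun i _ =>
      (EuclideanSpace.proj i).continuous.comp (cont_A.clm_apply continuous_const)
  have hν_int : Integrable ν := by
    by_contra h
    rw [integral_undef h] at hνprob
    exact one_ne_zero hνprob.symm
  set c : ℝ := σ * C + εσ + (α - 1) * Rs with hc
  have hRs0 : 0 ≤ Rs := le_trans (norm_nonneg _) (hRs 0)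
  have hεσ0 : 0 ≤ εσ := le_trans (norm_nonneg _) (happrox 0)
  have hσC0 : 0 ≤ σ * C := le_trans (norm_nonneg _) (hmis 0)
  have hc0 : 0 ≤ c := by
    have h1 : 0 ≤ (α - 1) * Rs := mul_nonneg (by linarith) hRs0
    rw [hc]; linarith
  have hw_eq : ∀ x, fderiv ℝ ν x (gradient f x)
      = (inner ℝ (gradient (fun y => Real.log (ν y)) x) (gradient f x) : ℝ) * ν x := by
    intro x
    rw [hu_eq x, real_inner_smul_left, ← inner_gradient_eq ν x (gradient f x),
      inv_mul_eq_div, div_mul_eq_mul_div, mul_div_assoc,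
      div_self (hνpos x).ne', mul_one]
  have hΔle : ∀ x, |diverg (gradient f) x| ≤ n * Lf := laplacian_abs_le f Lf hLf.le hflip
  have hdiv_eq : ∀ x, diverg (fun y => ν y • gradient f y) x
      = fderiv ℝ ν x (gradient f x) + ν x * diverg (gradient f) x :=
    diverg_smul_grad ν f hνd hFd
  have I_w : Integrable (fun x => fderiv ℝ ν x (gradient f x)) := by
    refine Integrable.mono' (hint1.add hint2) cont_w.aestronglyMeasurable
      (ae_of_all _ fun x => ?_)
    rw [Real.norm_eq_abs, hw_eq x, abs_mul, abs_of_nonneg (hνpos x).le]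
    simp only [Pi.add_apply]
    have h1 := abs_real_inner_le_norm (gradient (fun y => Real.log (ν y)) x) (gradient f x)
    have h2 := (hνpos x).le
    calc |(inner ℝ (gradient (fun y => Real.log (ν y)) x) (gradient f x) : ℝ)| * ν x
        ≤ (‖gradient (fun y => Real.log (ν y)) x‖ * ‖gradient f x‖) * ν x :=
          mul_le_mul_of_nonneg_right h1 h2
      _ ≤ (‖gradient f x‖ ^ 2 + ‖gradient (fun y => Real.log (ν y)) x‖ ^ 2) * ν x := by
          refine mul_le_mul_of_nonneg_right ?_ h2
          nlinarith [sq_nonneg (‖gradient (fun y => Real.log (ν y)) x‖ - ‖gradient f x‖)]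
      _ = ‖gradient f x‖ ^ 2 * ν x + ‖gradient (fun y => Real.log (ν y)) x‖ ^ 2 * ν x := by
          ring
  have I_Δν : Integrable (fun x => ν x * diverg (gradient f) x) := by
    refine Integrable.mono' (hν_int.const_mul (n * Lf))
      ((cont_ν.mul cont_Δ).aestronglyMeasurable) (ae_of_all _ fun x => ?_)
    rw [Real.norm_eq_abs, abs_mul, abs_of_nonneg (hνpos x).le]
    calc ν x * |diverg (gradient f) x| ≤ ν x * (n * Lf) :=
          mul_le_mul_of_nonneg_left (hΔle x) (hνpos x).le
      _ = (n * Lf) * ν x := mul_comm _ _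
  have hsum : (∫ x, (fderiv ℝ ν x (gradient f x) + ν x * diverg (gradient f) x)) = 0 := by
    have h : (fun x => fderiv ℝ ν x (gradient f x) + ν x * diverg (gradient f) x)
        = diverg (fun y => ν y • gradient f y) := funext fun x => (hdiv_eq x).symm
    rw [h]; exact hdivthm
  have hsplit : (∫ x, fderiv ℝ ν x (gradient f x))
      + (∫ x, ν x * diverg (gradient f) x) = 0 := by
    rw [← integral_add I_w I_Δν]; exact hsum
  have hνΔ_le : (∫ x, ν x * diverg (gradient f) x) ≤ n * Lf := by
    have h1 : (∫ x, ν x * diverg (gradient f) x) ≤ ∫ x, (n * Lf) * ν x := by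
      refine integral_mono I_Δν (hν_int.const_mul _) fun x => ?_
      have h2 := (abs_le.mp (hΔle x)).2
      have h3 := (hνpos x).le
      nlinarith
    rwa [integral_const_mul, hνprob, mul_one] at h1
  have hw_ge : (-(n * Lf) : ℝ) ≤ ∫ x, fderiv ℝ ν x (gradient f x) := by linarith
  have I2 : Integrable (fun x =>
      ‖gradient (fun y => Real.log (ν y)) x + gradient f x‖ ^ 2 * ν x) := by
    refine Integrable.mono' ((hint1.const_mul 2).add (hint2.const_mul 2))
      (((cont_u.add hFc).norm.pow 2).mul cont_ν).aestronglyMeasurable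
      (ae_of_all _ fun x => ?_)
    rw [Real.norm_eq_abs, abs_of_nonneg (mul_nonneg (by positivity) (hνpos x).le)]
    simp only [Pi.add_apply]
    have htr := norm_add_le (gradient (fun y => Real.log (ν y)) x) (gradient f x)
    have h5 : ‖gradient (fun y => Real.log (ν y)) x + gradient f x‖ ^ 2
        ≤ 2 * ‖gradient f x‖ ^ 2 + 2 * ‖gradient (fun y => Real.log (ν y)) x‖ ^ 2 := by
      nlinarith [norm_nonneg (gradient (fun y => Real.log (ν y)) x + gradient f x),
        norm_nonneg (gradient (fun y => Real.log (ν y)) x), norm_nonneg (gradient f x),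
        sq_nonneg (‖gradient (fun y => Real.log (ν y)) x‖ - ‖gradient f x‖)]
    calc ‖gradient (fun y => Real.log (ν y)) x + gradient f x‖ ^ 2 * ν x
        ≤ (2 * ‖gradient f x‖ ^ 2 + 2 * ‖gradient (fun y => Real.log (ν y)) x‖ ^ 2) * ν x :=
          mul_le_mul_of_nonneg_right h5 (hνpos x).le
      _ = 2 * (‖gradient f x‖ ^ 2 * ν x)
          + 2 * (‖gradient (fun y => Real.log (ν y)) x‖ ^ 2 * ν x) := by ring
  have hFI_eq : fisherInfo ν piD
      = ∫ x, ‖gradient (fun y => Real.log (ν y)) x + gradient f x‖ ^ 2 * ν x := by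
    unfold fisherInfo
    congr 1; funext x
    rw [gradient_log_piD f Z hZpos piD hpiD x, sub_neg_eq_add]
  have hpt2 : ∀ x, ‖gradient f x‖ ^ 2 * ν x
      ≤ ‖gradient (fun y => Real.log (ν y)) x + gradient f x‖ ^ 2 * ν x
        - 2 * fderiv ℝ ν x (gradient f x) := by
    intro x
    have hexp := norm_add_sq_real
      (gradient (fun y => Real.log (ν y)) x) (gradient f x)
    rw [hw_eq x]
    have h6 : ‖gradient (fun y => Real.log (ν y)) x + gradient f x‖ ^ 2 * ν x
        = ‖gradient (fun y => Real.log (ν y)) x‖ ^ 2 * ν x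
          + 2 * ((inner ℝ (gradient (fun y => Real.log (ν y)) x) (gradient f x) : ℝ) * ν x)
          + ‖gradient f x‖ ^ 2 * ν x := by rw [hexp]; ring
    have h7 : 0 ≤ ‖gradient (fun y => Real.log (ν y)) x‖ ^ 2 * ν x :=
      mul_nonneg (sq_nonneg _) (hνpos x).le
    linarith
  have hA : (∫ x, ‖gradient f x‖ ^ 2 * ν x) ≤ fisherInfo ν piD + 2 * (n * Lf) := by
    have hmono := integral_mono hint1 (I2.sub (I_w.const_mul 2)) hpt2
    simp only [Pi.sub_apply] at hmono
    rw [integral_sub I2 (I_w.const_mul 2), integral_const_mul] at hmono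
    rw [hFI_eq]
    linarith
  have hpt1 : ∀ x, ‖gradient g x - α • S x‖ ^ 2 * ν x
      ≤ 2 * (‖gradient f x‖ ^ 2 * ν x) + (2 * c ^ 2) * ν x := by
    intro x
    have hG : gradient g x = gradient f x + gradient (fun y => Real.log (p y)) x :=
      sub_eq_iff_eq_add.mp (hgradf x).symm
    have hid : gradient g x - α • S x
        = gradient f x + ((gradient (fun y => Real.log (p y)) x - qσ x)
            + ((qσ x - S x) + (1 - α) • S x)) := by
      rw [hG]; module
    have hn1 : ‖gradient (fun y => Real.log (p y)) x - qσ x‖ ≤ σ * C := by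
      rw [norm_sub_rev]; exact hmis x
    have hn2 : ‖qσ x - S x‖ ≤ εσ := by rw [norm_sub_rev]; exact happrox x
    have hn3 : ‖(1 - α) • S x‖ ≤ (α - 1) * Rs := by
      rw [norm_smul, Real.norm_eq_abs, abs_of_nonpos (by linarith)]
      calc -(1 - α) * ‖S x‖ = (α - 1) * ‖S x‖ := by ring
        _ ≤ (α - 1) * Rs := mul_le_mul_of_nonneg_left (hRs x) (by linarith)
    have h1 : ‖gradient g x - α • S x‖ ≤ ‖gradient f x‖ + c := by
      rw [hid]
      have t1 := norm_add_le (gradient f x)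
        ((gradient (fun y => Real.log (p y)) x - qσ x)
          + ((qσ x - S x) + (1 - α) • S x))
      have t2 := norm_add_le (gradient (fun y => Real.log (p y)) x - qσ x)
        ((qσ x - S x) + (1 - α) • S x)
      have t3 := norm_add_le (qσ x - S x) ((1 - α) • S x)
      rw [hc]; linarith
    have h2 : ‖gradient g x - α • S x‖ ^ 2 ≤ 2 * ‖gradient f x‖ ^ 2 + 2 * c ^ 2 := by
      nlinarith [mul_le_mul h1 h1 (norm_nonneg (gradient g x - α • S x))
        (add_nonneg (norm_nonneg (gradient f x)) hc0),
        sq_nonneg (‖gradient f x‖ - c), norm_nonneg (gradient g x - α • S x)]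
    calc ‖gradient g x - α • S x‖ ^ 2 * ν x
        ≤ (2 * ‖gradient f x‖ ^ 2 + 2 * c ^ 2) * ν x :=
          mul_le_mul_of_nonneg_right h2 (hνpos x).le
      _ = 2 * (‖gradient f x‖ ^ 2 * ν x) + (2 * c ^ 2) * ν x := by ring
  have IR1 : Integrable (fun x => 2 * (‖gradient f x‖ ^ 2 * ν x) + (2 * c ^ 2) * ν x) :=
    (hint1.const_mul 2).add (hν_int.const_mul (2 * c ^ 2))
  have hstep1 : (∫ x, ‖gradient g x - α • S x‖ ^ 2 * ν x)
      ≤ 2 * (∫ x, ‖gradient f x‖ ^ 2 * ν x) + 2 * c ^ 2 := by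
    have h := integral_mono_of_nonneg
      (ae_of_all _ fun x => mul_nonneg (by positivity) (hνpos x).le) IR1
      (ae_of_all _ hpt1)
    rwa [integral_add (hint1.const_mul 2) (hν_int.const_mul (2 * c ^ 2)),
      integral_const_mul, integral_const_mul, hνprob, mul_one] at h
  linarith
end
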